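/- Fix an integer n ≥ 2 and let X_2, ..., X_n be independent random variables, where X_k is exponentially distributed with rate (k-1)/2, and let L_n := Σ_{k=2}^{n} X_k. Then for every positive integer j, E[L_n^j] = j! 2^j Σ_{1 ≤ k_1 ≤ ... ≤ k_j ≤ n-1} 1/(k_1 ⋯ k_j), where the sum extends over all nondecreasing j-tuples of integers between 1 and n-1. -/

import Mathlib

open MeasureTheory ProbabilityTheory Real Set

lemma expIntegrableOn (r : ℝ) (hr : 0 < r) (m : ℕ) :
    IntegrableOn (fun x : ℝ => x ^ m * Real.exp (-(r * x))) (Set.Ioi 0) := by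
  have h := integrableOn_rpow_mul_exp_neg_mul_rpow (s := (m : ℝ)) (p := 1)
    (by exact_mod_cast lt_of_lt_of_le neg_one_lt_zero (Nat.cast_nonneg m)) zero_lt_one hr
  simpa [Real.rpow_natCast, Real.rpow_one, neg_mul] using h

lemma expPDFReal_eq (r : ℝ) (hr : 0 < r) (x : ℝ) :
    gammaPDFReal 1 r x = if 0 ≤ x then r * Real.exp (-(r * x)) else 0 := by
  unfold gammaPDFReal
  split_ifs with h
  · simp [Real.Gamma_one, Real.rpow_one, Real.rpow_zero]
  · rfl

lemma expMeasure_eq (r : ℝ) :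
    expMeasure r = volume.withDensity
      (fun x => ((gammaPDFReal 1 r x).toNNReal : ENNReal)) := rfl

lemma integral_expMeasure (r : ℝ) (hr : 0 < r) (m : ℕ) :
    ∫ x, x ^ m ∂(expMeasure r) = (m.factorial : ℝ) / r ^ m := by
  rw [expMeasure_eq, integral_withDensity_eq_integral_smul
    ((measurable_gammaPDFReal 1 r).real_toNNReal) (fun x => x ^ m)]
  have key : ∀ x : ℝ, (gammaPDFReal 1 r x).toNNReal • (x ^ m)
      = Set.indicator (Set.Ici 0) (fun x => r * Real.exp (-(r * x)) * x ^ m) x := by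
    intro x
    rw [NNReal.smul_def, smul_eq_mul, Real.coe_toNNReal',
      max_eq_left (gammaPDFReal_nonneg zero_lt_one hr x), expPDFReal_eq r hr]
    by_cases h : 0 ≤ x <;>
      simp [Set.indicator_apply, Set.mem_Ici, h]
  simp_rw [key]
  rw [MeasureTheory.integral_indicator measurableSet_Ici,
    MeasureTheory.integral_Ici_eq_integral_Ioi]
  have : ∀ x ∈ Set.Ioi (0:ℝ), r * Real.exp (-(r * x)) * x ^ m
      = r * (x ^ ((m : ℝ) + 1 - 1) * Real.exp (-(r * x))) := by
    intro x hx
    rw [add_sub_cancel_right, Real.rpow_natCast]; ring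
  rw [setIntegral_congr_fun measurableSet_Ioi this, MeasureTheory.integral_const_mul,
    integral_rpow_mul_exp_neg_mul_Ioi (by positivity) hr]
  rw [Real.Gamma_nat_eq_factorial,
    show ((m : ℝ) + 1) = ((m + 1 : ℕ) : ℝ) by push_cast; ring, Real.rpow_natCast]
  field_simp
  ring_nf
  rw [inv_pow]; field_simp

lemma integrable_pow_expMeasure (r : ℝ) (hr : 0 < r) (m : ℕ) :
    Integrable (fun x : ℝ => x ^ m) (expMeasure r) := by
  rw [expMeasure_eq, integrable_withDensity_iff_integrable_smul
    ((measurable_gammaPDFReal 1 r).real_toNNReal)]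
  have key : ∀ x : ℝ, (gammaPDFReal 1 r x).toNNReal • (x ^ m)
      = Set.indicator (Set.Ici 0) (fun x => r * Real.exp (-(r * x)) * x ^ m) x := by
    intro x
    rw [NNReal.smul_def, smul_eq_mul, Real.coe_toNNReal',
      max_eq_left (gammaPDFReal_nonneg zero_lt_one hr x), expPDFReal_eq r hr]
    by_cases h : 0 ≤ x <;>
      simp [Set.indicator_apply, Set.mem_Ici, h]
  simp_rw [key]
  rw [integrable_indicator_iff measurableSet_Ici]
  rw [integrableOn_Ici_iff_integrableOn_Ioi' (by simp)]
  exact IntegrableOn.congr_fun ((expIntegrableOn r hr m).const_mul r)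
    (fun x _ => by ring) measurableSet_Ioi

open MeasureTheory ProbabilityTheory Finset

noncomputable def Mset (m j : ℕ) : Finset (Fin j → ℕ) :=
  @Finset.filter _ (fun f => Monotone f) (Classical.decPred _)
    (Fintype.piFinset fun _ => Finset.Icc 1 m)

lemma mem_Mset {m j : ℕ} {f : Fin j → ℕ} :
    f ∈ Mset m j ↔ Monotone f ∧ ∀ i, 1 ≤ f i ∧ f i ≤ m := by
  simp [Mset, Fintype.mem_piFinset, Finset.mem_filter, Finset.mem_Icc, and_comm]

noncomputable def Tsum (m j : ℕ) : ℝ := ∑ f ∈ Mset m j, ∏ i, 1 / (f i : ℝ)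

lemma tsum_eq_Tsum (m j : ℕ) :
    (∑' f : {f : Fin j → ℕ // Monotone f ∧ ∀ i, 1 ≤ f i ∧ f i ≤ m},
      ∏ i, 1 / (f.1 i : ℝ)) = Tsum m j := by
  rw [Tsum, ← Finset.tsum_subtype (Mset m j) (fun f => ∏ i, 1 / (f i : ℝ)),
    ← Equiv.tsum_eq (Equiv.subtypeEquivRight (fun f => mem_Mset.symm))
      (fun f : {f : Fin j → ℕ // f ∈ Mset m j} => ∏ i, 1 / (f.1 i : ℝ))]
  exact tsum_congr fun f => by simp [Equiv.subtypeEquivRight]; rfl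

lemma Tsum_zero_left (j : ℕ) (hj : 1 ≤ j) : Tsum 0 j = 0 := by
  rw [Tsum]
  convert Finset.sum_empty
  rw [Finset.eq_empty_iff_forall_notMem]
  intro f hf
  obtain ⟨hmono, hb⟩ := mem_Mset.mp hf
  have := hb ⟨0, hj⟩
  omega

lemma Tsum_zero_right (m : ℕ) : Tsum m 0 = 1 := by
  rw [Tsum]
  have : Mset m 0 = {fun i => i.elim0} := by
    rw [Finset.eq_singleton_iff_unique_mem]
    constructor
    · exact mem_Mset.mpr ⟨fun a => a.elim0, fun i => i.elim0⟩
    · intro f _; funext i; exact i.elim0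
  rw [this, Finset.sum_singleton, Finset.univ_eq_empty, Finset.prod_empty]

lemma card_filter_lt_fin (j k : ℕ) (hk : k ≤ j) :
    (Finset.univ.filter fun t : Fin j => (t : ℕ) < k).card = k := by
  have h : (Finset.univ.filter fun t : Fin j => (t : ℕ) < k).card = (Finset.range k).card :=
    Finset.card_bij' (fun a _ => (a : ℕ))
      (fun b hb => (⟨b, lt_of_lt_of_le (Finset.mem_range.mp hb) hk⟩ : Fin j))
      (fun a ha => Finset.mem_range.mpr (Finset.mem_filter.mp ha).2)
      (fun b hb => Finset.mem_filter.mpr ⟨Finset.mem_univ _, Finset.mem_range.mp hb⟩)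
      (fun a _ => rfl) (fun b _ => rfl)
  rw [h, Finset.card_range]

def cnt (m j : ℕ) (f : Fin j → ℕ) : ℕ :=
  (Finset.univ.filter fun t : Fin j => f t ≤ m).card

lemma cnt_le (m j : ℕ) (f : Fin j → ℕ) : cnt m j f ≤ j :=
  (Finset.card_filter_le _ _).trans (by simp)

lemma cnt_spec {m j : ℕ} {f : Fin j → ℕ} (hf : Monotone f) (t : Fin j) :
    f t ≤ m ↔ (t : ℕ) < cnt m j f := by
  constructor
  · intro h
    have hsub : Finset.Iic t ⊆ Finset.univ.filter fun u => f u ≤ m := by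
      intro u hu
      rw [Finset.mem_Iic] at hu
      exact Finset.mem_filter.mpr ⟨Finset.mem_univ _, le_trans (hf hu) h⟩
    have hc := Finset.card_le_card hsub
    rw [Fin.card_Iic] at hc
    exact Nat.lt_of_lt_of_le (Nat.lt_succ_self _) hc
  · intro h
    by_contra hc
    push_neg at hc
    have hsub : (Finset.univ.filter fun u => f u ≤ m) ⊆ Finset.Iio t := by
      intro u hu
      have hu2 := (Finset.mem_filter.mp hu).2
      rw [Finset.mem_Iio]
      by_contra hut
      push_neg at hut
      exact absurd (le_trans (hf hut) hu2) (not_le.mpr hc)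
    have hcard := Finset.card_le_card hsub
    rw [Fin.card_Iio] at hcard
    exact absurd h (not_lt.mpr hcard)

lemma Tsum_succ (m j : ℕ) :
    Tsum (m + 1) j
      = ∑ k ∈ Finset.range (j + 1), Tsum m k * (1 / ((m + 1 : ℕ) : ℝ)) ^ (j - k) := by
  classical
  rw [Tsum, ← Finset.sum_fiberwise_of_maps_to (g := fun f => cnt m j f)
    (t := Finset.range (j + 1))
    (fun f _ => Finset.mem_range.mpr (Nat.lt_succ_of_le (cnt_le m j f)))
    (fun f => ∏ i, 1 / (f i : ℝ))]
  refine Finset.sum_congr rfl fun k hk => ?_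
  have hkj : k ≤ j := Nat.lt_succ_iff.mp (Finset.mem_range.mp hk)
  rw [Tsum, Finset.sum_mul]
  refine Finset.sum_nbij' (i := fun f => fun t : Fin k => f (Fin.castLE hkj t))
    (j := fun f' => fun t : Fin j => if h : (t : ℕ) < k then f' ⟨t, h⟩ else m + 1)
    ?_ ?_ ?_ ?_ ?_
  · -- maps to Mset m k
    intro f hf
    obtain ⟨hfM, hcnt⟩ := Finset.mem_filter.mp hf
    obtain ⟨hmono, hb⟩ := mem_Mset.mp hfM
    refine mem_Mset.mpr ⟨fun a b hab => hmono (by simpa using hab), fun t => ?_⟩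
    refine ⟨(hb _).1, ?_⟩
    rw [cnt_spec hmono]
    rw [hcnt]
    simpa using t.isLt
  · -- inverse maps into the fiber
    intro f' hf'
    obtain ⟨hmono, hb⟩ := mem_Mset.mp hf'
    have hF : ∀ t : Fin j, (if h : (t : ℕ) < k then f' ⟨t, h⟩ else m + 1) ≤ m + 1 := by
      intro t
      split_ifs with h
      · exact le_trans (hb _).2 (Nat.le_succ m)
      · exact le_rfl
    have hFmono : Monotone (fun t : Fin j => if h : (t : ℕ) < k then f' ⟨t, h⟩ else m + 1) := by
      intro a b hab
      have hab' : (a : ℕ) ≤ (b : ℕ) := hab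
      by_cases ha : (a : ℕ) < k
      · by_cases hbk : (b : ℕ) < k
        · simp only [dif_pos ha, dif_pos hbk]
          exact hmono (show (⟨a, ha⟩ : Fin k) ≤ ⟨b, hbk⟩ from hab')
        · simp only [dif_pos ha, dif_neg hbk]
          exact le_trans (hb _).2 (Nat.le_succ m)
      · have hbk : ¬ (b : ℕ) < k := fun h => ha (lt_of_le_of_lt hab' h)
        simp only [dif_neg ha, dif_neg hbk, le_refl]
    refine Finset.mem_filter.mpr ⟨mem_Mset.mpr ⟨hFmono, fun t => ?_⟩, ?_⟩
    · constructor
      · beta_reduce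
        split_ifs with h
        · exact (hb _).1
        · omega
      · exact hF t
    · -- cnt = k
      show cnt m j _ = k
      rw [cnt]
      rw [show (Finset.univ.filter fun t : Fin j =>
          (if h : (t : ℕ) < k then f' ⟨t, h⟩ else m + 1) ≤ m)
        = Finset.univ.filter (fun t : Fin j => (t : ℕ) < k) from ?_]
      · exact card_filter_lt_fin j k hkj
      · refine Finset.filter_congr fun t _ => ?_
        constructor
        · intro ht
          by_contra hc
          rw [dif_neg hc] at ht
          omega
        · intro ht
          rw [dif_pos ht]
          exact (hb _).2
  · -- left inverse
    intro f hf
    obtain ⟨hfM, hcnt⟩ := Finset.mem_filter.mp hf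
    obtain ⟨hmono, hb⟩ := mem_Mset.mp hfM
    funext t
    beta_reduce
    by_cases h : (t : ℕ) < k
    · rw [dif_pos h]
      exact congrArg f (Fin.ext rfl)
    · rw [dif_neg h]
      have h1 : ¬ f t ≤ m := by
        rw [cnt_spec hmono, hcnt]
        exact h
      have h2 := (hb t).2
      omega
  · -- right inverse
    intro f' _
    funext t
    beta_reduce
    simp only [Fin.coe_castLE]
    rw [dif_pos t.isLt, Fin.eta]
  · -- sums agree
    intro f hf
    obtain ⟨hfM, hcnt⟩ := Finset.mem_filter.mp hf
    obtain ⟨hmono, hb⟩ := mem_Mset.mp hfM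
    set g : ℕ → ℝ := fun i => if h : i < j then 1 / (f ⟨i, h⟩ : ℝ) else 1 with hg
    have h1 : (∏ i : Fin j, 1 / (f i : ℝ)) = ∏ i ∈ Finset.range j, g i := by
      rw [← Fin.prod_univ_eq_prod_range g j]
      refine Finset.prod_congr rfl fun i _ => ?_
      simp only [hg]
      rw [dif_pos i.isLt, Fin.eta]
    have h2 : (∏ t : Fin k, 1 / ((f (Fin.castLE hkj t)) : ℝ))
        = ∏ i ∈ Finset.range k, g i := by
      rw [← Fin.prod_univ_eq_prod_range g k]
      refine Finset.prod_congr rfl fun t _ => ?_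
      simp only [hg]
      rw [dif_pos (lt_of_lt_of_le t.isLt hkj)]
      rfl
    have h3 : (∏ i ∈ Finset.range j, g i)
        = (∏ i ∈ Finset.range k, g i) * ∏ i ∈ Finset.Ico k j, g i := by
      rw [Finset.range_eq_Ico, ← Finset.prod_Ico_consecutive g (Nat.zero_le k) hkj,
        ← Finset.range_eq_Ico]
    have h4 : (∏ i ∈ Finset.Ico k j, g i) = (1 / ((m + 1 : ℕ) : ℝ)) ^ (j - k) := by
      rw [show (∏ i ∈ Finset.Ico k j, g i)
          = ∏ _i ∈ Finset.Ico k j, (1 / ((m + 1 : ℕ) : ℝ)) from ?_]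
      · rw [Finset.prod_const, Nat.card_Ico]
      · refine Finset.prod_congr rfl fun i hi => ?_
        obtain ⟨hik, hij⟩ := Finset.mem_Ico.mp hi
        simp only [hg]
        rw [dif_pos hij]
        have h5 : ¬ f ⟨i, hij⟩ ≤ m := by
          rw [cnt_spec hmono, hcnt]
          simp only [Fin.val_mk]
          omega
        have h6 := (hb ⟨i, hij⟩).2
        have : f ⟨i, hij⟩ = m + 1 := by omega
        rw [this]
    rw [h1, h3, h4, h2]

/-- Fix `n ≥ 2` and let `X_2, …, X_n` be independent random variables, `X_k`
exponential with rate `(k-1)/2` (here `X i` for `i : Fin (n-1)` stands for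
`X_{i+2}`), and let `L_n := Σ_{k=2}^n X_k`.  Then for every `j ≥ 1`,
`E[L_n^j] = j! 2^j Σ_{1 ≤ k_1 ≤ … ≤ k_j ≤ n-1} 1/(k_1 ⋯ k_j)`, the sum extending
over all nondecreasing `j`-tuples of integers between `1` and `n-1`. -/
theorem stmt_11 {Ω : Type*} [MeasureSpace Ω] [IsProbabilityMeasure (ℙ : Measure Ω)]
    (n : ℕ) (hn : 2 ≤ n)
    (X : Fin (n - 1) → Ω → ℝ) (hmeas : ∀ i, Measurable (X i))
    (hind : iIndepFun X ℙ)
    (hdist : ∀ i : Fin (n - 1), Measure.map (X i) ℙ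
      = expMeasure ((((i : ℕ) : ℝ) + 1) / 2)) :
    ∀ j : ℕ, 1 ≤ j →
      (∫ ω, (∑ i, X i ω) ^ j ∂ℙ)
        = (j.factorial : ℝ) * 2 ^ j *
            ∑' f : {f : Fin j → ℕ // Monotone f ∧ ∀ i, 1 ≤ f i ∧ f i ≤ n - 1},
              ∏ i, 1 / (f.1 i : ℝ) := by
  classical
  have hXint : ∀ (i : Fin (n - 1)) (d : ℕ), Integrable (fun ω => (X i ω) ^ d) ℙ := by
    intro i d
    have h1 : Integrable (fun x : ℝ => x ^ d) (Measure.map (X i) ℙ) := by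
      rw [hdist i]
      exact integrable_pow_expMeasure _ (by positivity) d
    exact (integrable_map_measure (measurable_id'.pow_const d).aestronglyMeasurable
      (hmeas i).aemeasurable).mp h1
  have hXval : ∀ (i : Fin (n - 1)) (d : ℕ),
      ∫ ω, (X i ω) ^ d ∂ℙ = (d.factorial : ℝ) * 2 ^ d / (((i : ℕ) : ℝ) + 1) ^ d := by
    intro i d
    have h0 : (0 : ℝ) < (((i : ℕ) : ℝ) + 1) / 2 := by positivity
    rw [← integral_map (hmeas i).aemeasurable
        (measurable_id'.pow_const d).aestronglyMeasurable,
      hdist i, integral_expMeasure _ h0 d, div_pow]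
    rw [div_div_eq_mul_div]
  have main : ∀ m : ℕ, m ≤ n - 1 → ∀ j : ℕ,
      Integrable (fun ω =>
        (∑ i ∈ Finset.univ.filter (fun i : Fin (n - 1) => (i : ℕ) < m), X i ω) ^ j) ℙ ∧
      (∫ ω, (∑ i ∈ Finset.univ.filter (fun i : Fin (n - 1) => (i : ℕ) < m), X i ω) ^ j ∂ℙ)
        = (j.factorial : ℝ) * 2 ^ j * Tsum m j := by
    intro m
    induction m with
    | zero =>
      intro _ j
      have he : Finset.univ.filter (fun i : Fin (n - 1) => (i : ℕ) < 0) = ∅ := by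
        simp
      rw [he]
      simp only [Finset.sum_empty]
      rcases Nat.eq_zero_or_pos j with hj | hj
      · subst hj
        simp [Tsum_zero_right]
      · rw [zero_pow (by omega), Tsum_zero_left j hj]
        simp
    | succ m ih =>
      intro hm1 j
      have hm : m ≤ n - 1 := by omega
      have ha : (⟨m, by omega⟩ : Fin (n - 1)) ∈ (Finset.univ : Finset (Fin (n - 1))) :=
        Finset.mem_univ _
      set a : Fin (n - 1) := ⟨m, by omega⟩ with ha_def
      set s : Finset (Fin (n - 1)) := Finset.univ.filter (fun i => (i : ℕ) < m) with hs_def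
      have hans : a ∉ s := by simp [hs_def, ha_def]
      have hfilter : Finset.univ.filter (fun i : Fin (n - 1) => (i : ℕ) < m + 1)
          = insert a s := by
        ext i
        simp only [Finset.mem_filter, Finset.mem_univ, true_and, Finset.mem_insert,
          hs_def, ha_def, Fin.ext_iff]
        omega
      set S : Ω → ℝ := fun ω => ∑ i ∈ s, X i ω with hS_def
      have hSa : IndepFun S (X a) ℙ := by
        have := hind.indepFun_finsetSum_of_notMem hmeas hans
        convert this using 1
        funext ω
        simp [hS_def]
      have hIndep : ∀ c d : ℕ, IndepFun (fun ω => S ω ^ c) (fun ω => X a ω ^ d) ℙ :=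
        fun c d => (hSa.comp (measurable_id'.pow_const c) (measurable_id'.pow_const d))
      have hint : ∀ k ∈ Finset.range (j + 1), Integrable
          (fun ω => S ω ^ k * X a ω ^ (j - k) * ((j.choose k : ℕ) : ℝ)) ℙ :=
        fun k _ => (((hIndep k (j - k)).integrable_mul ((ih hm k).1)
          (hXint a (j - k))).mul_const _)
      rw [hfilter]
      have hrw : ∀ ω, (∑ i ∈ insert a s, X i ω) ^ j
          = ∑ k ∈ Finset.range (j + 1),
              S ω ^ k * X a ω ^ (j - k) * ((j.choose k : ℕ) : ℝ) := by
        intro ω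
        rw [Finset.sum_insert hans, add_comm, add_pow]
      simp only [hrw]
      refine ⟨integrable_finset_sum _ hint, ?_⟩
      rw [integral_finset_sum _ hint, Tsum_succ, Finset.mul_sum]
      refine Finset.sum_congr rfl fun k hk => ?_
      have hkj : k ≤ j := Nat.lt_succ_iff.mp (Finset.mem_range.mp hk)
      rw [integral_mul_const]
      have hmul : (∫ ω, S ω ^ k * X a ω ^ (j - k) ∂ℙ)
          = (∫ ω, S ω ^ k ∂ℙ) * ∫ ω, X a ω ^ (j - k) ∂ℙ :=
        (hIndep k (j - k)).integral_mul_eq_mul_integral ((ih hm k).1.aestronglyMeasurable)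
          (hXint a (j - k)).aestronglyMeasurable
      rw [hmul, hXval a (j - k), (ih hm k).2]
      have hca : ((a : ℕ) : ℝ) = (m : ℝ) := by simp [ha_def]
      rw [hca]
      have hfact : ((j.choose k : ℕ) : ℝ) * (k.factorial : ℕ) * ((j - k).factorial : ℕ)
          = (j.factorial : ℕ) := by
        exact_mod_cast congrArg (Nat.cast : ℕ → ℝ)
          (Nat.choose_mul_factorial_mul_factorial hkj)
      have h2 : (2 : ℝ) ^ k * 2 ^ (j - k) = 2 ^ j := by
        rw [← pow_add]
        congr 1
        omega
      have hm0 : ((m : ℝ) + 1) ≠ 0 := by positivity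
      push_cast
      push_cast at hfact
      field_simp
      have hinv : ((m : ℝ) + 1)⁻¹ ^ (j - k) * ((m : ℝ) + 1) ^ (j - k) = 1 := by
        rw [← mul_pow, inv_mul_cancel₀ hm0, one_pow]
      linear_combination (Tsum m k * (2:ℝ) ^ k * 2 ^ (j - k)) * hfact
        + (Tsum m k * (j.factorial : ℝ)) * h2
        + (-(Tsum m k * (j.factorial : ℝ) * 2 ^ j)) * hinv
  intro j _
  have huniv : Finset.univ.filter (fun i : Fin (n - 1) => (i : ℕ) < n - 1)
      = Finset.univ := by
    ext i
    simp [i.isLt]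
  have h := (main (n - 1) le_rfl j).2
  rw [huniv] at h
  rw [h, ← tsum_eq_Tsum (n - 1) j]
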